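/- Let f̄ be the measure on (0,∞) with density x ↦ (1/(2√π)) x^{−3/2} with respect to Lebesgue measure, and take the constant kernel K ≡ 2. Then f̄ has constant flux equal to one: for every z > 0, ∫_0^z ∫_{(z−x,∞)} 2x · (1/(2√π)) x^{−3/2} · (1/(2√π)) y^{−3/2} dy dx = 1. -/

import Mathlib

open MeasureTheory Set Real

lemma aux_integrable_half (z : ℝ) (hz : 0 < z) :
    IntervalIntegrable (fun x => x ^ (-(1:ℝ)/2) * (z - x) ^ (-(1:ℝ)/2)) volume 0 z := by
  have hmeas : ∀ a b : ℝ, AEStronglyMeasurable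
      (fun x => x ^ (-(1:ℝ)/2) * (z - x) ^ (-(1:ℝ)/2)) (volume.restrict (Ioc a b)) := by
    intro a b
    have : Measurable (fun x : ℝ => x ^ (-(1:ℝ)/2) * (z - x) ^ (-(1:ℝ)/2)) := by fun_prop
    exact this.aestronglyMeasurable
  apply IntervalIntegrable.trans (b := z/2)
  · rw [intervalIntegrable_iff_integrableOn_Ioc_of_le (by linarith)]
    have hint : IntegrableOn (fun x : ℝ => (z/2) ^ (-(1:ℝ)/2) * x ^ (-(1:ℝ)/2))
        (Ioc (0:ℝ) (z/2)) volume := by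
      have := (intervalIntegral.intervalIntegrable_rpow' (a := 0) (b := z/2) (r := -(1:ℝ)/2) (by norm_num))
      rw [intervalIntegrable_iff_integrableOn_Ioc_of_le (by linarith)] at this
      exact this.const_mul _
    refine hint.mono' (hmeas 0 (z/2)) ?_
    filter_upwards [ae_restrict_mem measurableSet_Ioc] with x hx
    have hx0 : 0 < x := hx.1
    have hzx : (0:ℝ) < z/2 := by linarith
    have h1 : (z - x) ^ (-(1:ℝ)/2) ≤ (z/2) ^ (-(1:ℝ)/2) :=
      Real.rpow_le_rpow_of_nonpos hzx (by linarith [hx.2]) (by norm_num)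
    have h2 : (0:ℝ) ≤ x ^ (-(1:ℝ)/2) := Real.rpow_nonneg hx0.le _
    have h3 : (0:ℝ) ≤ (z - x) ^ (-(1:ℝ)/2) := Real.rpow_nonneg (by linarith [hx.2]) _
    rw [Real.norm_eq_abs, abs_of_nonneg (mul_nonneg h2 h3)]
    calc x ^ (-(1:ℝ)/2) * (z - x) ^ (-(1:ℝ)/2)
        ≤ x ^ (-(1:ℝ)/2) * (z/2) ^ (-(1:ℝ)/2) := mul_le_mul_of_nonneg_left h1 h2
      _ = (z/2) ^ (-(1:ℝ)/2) * x ^ (-(1:ℝ)/2) := by ring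
  · rw [intervalIntegrable_iff_integrableOn_Ioc_of_le (by linarith)]
    have hint : IntegrableOn (fun x : ℝ => (z/2) ^ (-(1:ℝ)/2) * (z - x) ^ (-(1:ℝ)/2))
        (Ioc (z/2) z) volume := by
      have h0 : IntervalIntegrable (fun y : ℝ => y ^ (-(1:ℝ)/2)) volume 0 (z/2) :=
        intervalIntegral.intervalIntegrable_rpow' (by norm_num)
      have h1 : IntervalIntegrable (fun x : ℝ => (z - x) ^ (-(1:ℝ)/2)) volume (z - z/2) (z - 0) :=
        (h0.comp_sub_left z).symm
      have h2 : z - z/2 = z/2 := by ring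
      have h3 : z - 0 = z := by ring
      rw [h2, h3, intervalIntegrable_iff_integrableOn_Ioc_of_le (by linarith)] at h1
      exact h1.const_mul _
    refine hint.mono' (hmeas (z/2) z) ?_
    filter_upwards [ae_restrict_mem measurableSet_Ioc] with x hx
    have hx0 : (0:ℝ) < z/2 := by linarith
    have h1 : x ^ (-(1:ℝ)/2) ≤ (z/2) ^ (-(1:ℝ)/2) :=
      Real.rpow_le_rpow_of_nonpos hx0 hx.1.le (by norm_num)
    have h2 : (0:ℝ) ≤ x ^ (-(1:ℝ)/2) := Real.rpow_nonneg (by linarith [hx.1]) _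
    have h3 : (0:ℝ) ≤ (z - x) ^ (-(1:ℝ)/2) := Real.rpow_nonneg (by linarith [hx.2]) _
    rw [Real.norm_eq_abs, abs_of_nonneg (mul_nonneg h2 h3)]
    exact mul_le_mul_of_nonneg_right h1 h3

lemma aux_beta_half (z : ℝ) (hz : 0 < z) :
    ∫ x in (0:ℝ)..z, x ^ (-(1:ℝ)/2) * (z - x) ^ (-(1:ℝ)/2) = π := by
  have key := intervalIntegral.integral_eq_sub_of_hasDeriv_right_of_le
    (f := fun x => 2 * Real.arcsin (Real.sqrt (x / z)))
    (f' := fun x => x ^ (-(1:ℝ)/2) * (z - x) ^ (-(1:ℝ)/2))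
    hz.le ?cont ?deriv (aux_integrable_half z hz)
  case cont =>
    exact (continuous_const.mul (Real.continuous_arcsin.comp
      ((continuous_id.div_const z).sqrt))).continuousOn
  case deriv =>
    intro x hx
    have hx0 : 0 < x := hx.1
    have hxz : x < z := hx.2
    have hdiv : 0 < x / z := div_pos hx0 hz
    have hdiv1 : x / z < 1 := (div_lt_one hz).mpr hxz
    have hsqrt : HasDerivAt (fun y : ℝ => Real.sqrt (y / z))
        (1 / (2 * Real.sqrt (x / z)) * (1 / z)) x := by
      have h1 : HasDerivAt (fun y : ℝ => y / z) (1 / z) x := (hasDerivAt_id x).div_const z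
      exact (Real.hasDerivAt_sqrt hdiv.ne').comp x h1
    have harc : HasDerivAt Real.arcsin (1 / Real.sqrt (1 - Real.sqrt (x / z) ^ 2))
        (Real.sqrt (x / z)) := by
      apply Real.hasDerivAt_arcsin
      · nlinarith [Real.sqrt_nonneg (x / z)]
      · intro h
        have h2 := Real.sq_sqrt hdiv.le
        rw [h] at h2
        simp at h2; linarith
    have hcomp := (harc.comp x hsqrt).const_mul (2:ℝ)
    have heq : 2 * (1 / Real.sqrt (1 - Real.sqrt (x / z) ^ 2) *
        (1 / (2 * Real.sqrt (x / z)) * (1 / z))) = x ^ (-(1:ℝ)/2) * (z - x) ^ (-(1:ℝ)/2) := by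
      have hzx : (0:ℝ) < z - x := by linarith
      have hsx : (0:ℝ) < Real.sqrt x := Real.sqrt_pos.mpr hx0
      have hszx : (0:ℝ) < Real.sqrt (z - x) := Real.sqrt_pos.mpr hzx
      have hsz : (0:ℝ) < Real.sqrt z := Real.sqrt_pos.mpr hz
      rw [Real.sq_sqrt hdiv.le]
      have h1 : 1 - x / z = (z - x) / z := by field_simp
      rw [h1, Real.sqrt_div hzx.le, Real.sqrt_div hx0.le,
        show -(1:ℝ)/2 = -(1/2) by norm_num,
        Real.rpow_neg hx0.le, Real.rpow_neg hzx.le,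
        ← Real.sqrt_eq_rpow, ← Real.sqrt_eq_rpow]
      have hzz : Real.sqrt z * Real.sqrt z = z := Real.mul_self_sqrt hz.le
      field_simp
      nlinarith [hzz, hsx.le, hszx.le, hsz.le]
    rw [heq] at hcomp
    exact hcomp.hasDerivWithinAt
  rw [key]
  have h1 : Real.sqrt (z / z) = 1 := by rw [div_self hz.ne']; simp
  simp only [h1, zero_div, Real.sqrt_zero, Real.arcsin_one, Real.arcsin_zero]
  ring

theorem stationary_constant_flux (z : ℝ) (hz : 0 < z) :
    (∫ x in Ioc (0:ℝ) z,
        ∫ y in Ioi (z - x),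
          2 * x * (1 / (2 * Real.sqrt π) * x ^ (-(3:ℝ) / 2))
            * (1 / (2 * Real.sqrt π) * y ^ (-(3:ℝ) / 2)))
      = 1 := by
  have hsπ : Real.sqrt π * Real.sqrt π = π := Real.mul_self_sqrt Real.pi_pos.le
  rw [MeasureTheory.integral_Ioc_eq_integral_Ioo]
  have hcongr : ∀ x ∈ Ioo (0:ℝ) z,
      (∫ y in Ioi (z - x),
          2 * x * (1 / (2 * Real.sqrt π) * x ^ (-(3:ℝ) / 2))
            * (1 / (2 * Real.sqrt π) * y ^ (-(3:ℝ) / 2)))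
        = (1 / π) * (x ^ (-(1:ℝ)/2) * (z - x) ^ (-(1:ℝ)/2)) := by
    intro x hx
    have hx0 : 0 < x := hx.1
    have hzx : 0 < z - x := by linarith [hx.2]
    have hinner : (∫ y in Ioi (z - x),
        2 * x * (1 / (2 * Real.sqrt π) * x ^ (-(3:ℝ) / 2))
          * (1 / (2 * Real.sqrt π) * y ^ (-(3:ℝ) / 2)))
        = 2 * x * (1 / (2 * Real.sqrt π) * x ^ (-(3:ℝ) / 2)) * (1 / (2 * Real.sqrt π))
          * ∫ y in Ioi (z - x), y ^ (-(3:ℝ) / 2) := by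
      rw [← MeasureTheory.integral_const_mul]
      congr 1 with y
      ring
    rw [hinner, integral_Ioi_rpow_of_lt (by norm_num) hzx]
    have hpow : x * x ^ (-(3:ℝ)/2) = x ^ (-(1:ℝ)/2) := by
      nth_rewrite 1 [← Real.rpow_one x]
      rw [← Real.rpow_add hx0]
      norm_num
    have : -(3:ℝ)/2 + 1 = -(1:ℝ)/2 := by norm_num
    rw [this]
    rw [show (2:ℝ) * x * (1 / (2 * Real.sqrt π) * x ^ (-(3:ℝ)/2)) * (1 / (2 * Real.sqrt π))
        = (x * x ^ (-(3:ℝ)/2)) * (1 / (2 * Real.sqrt π) * (1 / (2 * Real.sqrt π)) * 2) by ring,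
      hpow]
    field_simp
    linear_combination (-1:ℝ) * hsπ
  rw [MeasureTheory.setIntegral_congr_fun measurableSet_Ioo hcongr,
    MeasureTheory.integral_const_mul, ← MeasureTheory.integral_Ioc_eq_integral_Ioo,
    ← intervalIntegral.integral_of_le hz.le, aux_beta_half z hz]
  field_simp
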